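/- Suppose α ∈ ℝ_+^J satisfies α_k = α_{J−k+1} for all k ∈ {1,...,J}, and τ ∈ ℝ^J satisfies α_k τ_k = −α_{J−k+1} τ_{J−k+1} for all k ∈ {1,...,J}. Then the GPCM probabilities satisfy π_j(θ, τ, α) = π_{J−j}(−θ, τ, α) for all θ ∈ ℝ and all j ∈ {0,...,J}. -/

import Mathlib

open Real Finset

noncomputable def gpcmPi (J : ℕ) (α τ : ℕ → ℝ) (θ : ℝ) (j : ℕ) : ℝ :=
  Real.exp (∑ s ∈ Finset.Icc 1 j, α s * (θ - τ s)) /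
    ∑ k ∈ Finset.Icc 0 J, Real.exp (∑ s ∈ Finset.Icc 1 k, α s * (θ - τ s))

lemma gpcm_key (J : ℕ) (α τ : ℕ → ℝ)
    (hsymα : ∀ k, 1 ≤ k → k ≤ J → α k = α (J - k + 1))
    (hsymτ : ∀ k, 1 ≤ k → k ≤ J → α k * τ k = -(α (J - k + 1) * τ (J - k + 1)))
    (θ : ℝ) (k : ℕ) (hk : k ≤ J) :
    ∑ s ∈ Finset.Icc 1 k, α s * (-θ - τ s) =
      (∑ s ∈ Finset.Icc 1 (J - k), α s * (θ - τ s)) -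
        ∑ s ∈ Finset.Icc 1 J, α s * (θ - τ s) := by
  have hsplit : (∑ s ∈ Finset.Icc 1 (J - k), α s * (θ - τ s)) +
      ∑ s ∈ Finset.Ioc (J - k) J, α s * (θ - τ s) =
      ∑ s ∈ Finset.Icc 1 J, α s * (θ - τ s) := by
    rw [show Finset.Icc 1 (J - k) = Finset.Ioc 0 (J - k) by rfl,
        show Finset.Icc 1 J = Finset.Ioc 0 J by rfl]
    exact Finset.sum_Ioc_consecutive _ (Nat.zero_le _) (Nat.sub_le _ _)
  have hbij : ∑ s ∈ Finset.Icc 1 k, α s * (-θ - τ s) =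
      -∑ s ∈ Finset.Ioc (J - k) J, α s * (θ - τ s) := by
    rw [← Finset.sum_neg_distrib]
    refine Finset.sum_nbij' (fun s => J - s + 1) (fun s => J - s + 1) ?_ ?_ ?_ ?_ ?_
    · intro a ha
      simp only [Finset.mem_Icc] at ha
      simp only [Finset.mem_Ioc]
      omega
    · intro b hb
      simp only [Finset.mem_Ioc] at hb
      simp only [Finset.mem_Icc]
      omega
    · intro a ha
      simp only [Finset.mem_Icc] at ha
      show J - (J - a + 1) + 1 = a
      omega
    · intro b hb
      simp only [Finset.mem_Ioc] at hb
      show J - (J - b + 1) + 1 = b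
      omega
    · intro a ha
      simp only [Finset.mem_Icc] at ha
      have h1 := hsymα a ha.1 (le_trans ha.2 hk)
      have h2 := hsymτ a ha.1 (le_trans ha.2 hk)
      show α a * (-θ - τ a) = -(α (J - a + 1) * (θ - τ (J - a + 1)))
      rw [← h1] at *
      nlinarith [h2]
  rw [hbij]
  linarith [hsplit]

/-- Under the symmetry conditions `α_k = α_{J−k+1}` and `α_k τ_k = −α_{J−k+1} τ_{J−k+1}`,
the GPCM probabilities satisfy `π_j(θ) = π_{J−j}(−θ)`. -/
theorem gpcm_symmetry (J : ℕ) (hJ : 1 ≤ J) (α τ : ℕ → ℝ) (hα : ∀ s, 0 < α s)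
    (hsymα : ∀ k, 1 ≤ k → k ≤ J → α k = α (J - k + 1))
    (hsymτ : ∀ k, 1 ≤ k → k ≤ J → α k * τ k = -(α (J - k + 1) * τ (J - k + 1))) :
    ∀ θ : ℝ, ∀ j, j ≤ J → gpcmPi J α τ θ j = gpcmPi J α τ (-θ) (J - j) := by
  intro θ j hj
  unfold gpcmPi
  set g : ℕ → ℝ := fun m => ∑ s ∈ Finset.Icc 1 m, α s * (θ - τ s) with hg
  have key := gpcm_key J α τ hsymα hsymτ θ
  have hnum : ∑ s ∈ Finset.Icc 1 (J - j), α s * (-θ - τ s) = g j - g J := by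
    rw [key (J - j) (Nat.sub_le _ _), Nat.sub_sub_self hj]
  have hden : ∑ k ∈ Finset.Icc 0 J, Real.exp (∑ s ∈ Finset.Icc 1 k, α s * (-θ - τ s)) =
      ∑ k ∈ Finset.Icc 0 J, Real.exp (g k - g J) := by
    refine Finset.sum_nbij' (fun k => J - k) (fun k => J - k) ?_ ?_ ?_ ?_ ?_
    · intro a _; simp only [Finset.mem_Icc]; omega
    · intro b _; simp only [Finset.mem_Icc]; omega
    · intro a ha
      simp only [Finset.mem_Icc] at ha
      show J - (J - a) = a
      omega
    · intro b hb
      simp only [Finset.mem_Icc] at hb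
      show J - (J - b) = b
      omega
    · intro a ha
      simp only [Finset.mem_Icc] at ha
      show Real.exp (∑ s ∈ Finset.Icc 1 a, α s * (-θ - τ s)) = Real.exp (g (J - a) - g J)
      rw [key a ha.2]
  rw [hnum] at *
  rw [hden]
  have hpos : (0:ℝ) < ∑ k ∈ Finset.Icc 0 J, Real.exp (g k) := by
    apply Finset.sum_pos (fun i _ => Real.exp_pos _)
    exact ⟨0, by simp⟩
  have hsum : ∑ k ∈ Finset.Icc 0 J, Real.exp (g k - g J) =
      (∑ k ∈ Finset.Icc 0 J, Real.exp (g k)) * Real.exp (-(g J)) := by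
    rw [Finset.sum_mul]
    exact Finset.sum_congr rfl (fun k _ => by rw [← Real.exp_add]; ring_nf)
  rw [hsum, Real.exp_sub]
  have hgJ := Real.exp_pos (g J)
  rw [Real.exp_neg]
  field_simp
  change (Real.exp (g j) * ∑ k ∈ Finset.Icc 0 J, Real.exp (g k)) / ∑ k ∈ Finset.Icc 0 J, Real.exp (g k) = Real.exp (g j)
  rw [mul_div_assoc, div_self hpos.ne', mul_one]
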